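/- Corollary (case p = 2 of the Main Lemma): Let λ ∈ (1/2, 1), γ > 0 and t > 0. Then (γ / Γ(2λ-1)) · ∫_0^t (t-s)^{2λ-2} · E_{2λ-1}(γ s^{2λ-1}) ds ≤ E_{2λ-1}(γ t^{2λ-1}). -/

import Mathlib

open MeasureTheory Filter

/-- The Mittag-Leffler function `E_α(x) = ∑_{n=0}^∞ x^n / Γ(nα + 1)`. -/
noncomputable def mittagLeffler (α x : ℝ) : ℝ :=
  ∑' n : ℕ, x ^ n / Real.Gamma ((n : ℝ) * α + 1)

lemma beta_real {a b t : ℝ} (ha : 0 < a) (hb : 0 < b) (ht : 0 < t) :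
    ∫ s in (0:ℝ)..t, s ^ (a - 1) * (t - s) ^ (b - 1) =
      Real.Gamma a * Real.Gamma b / Real.Gamma (a + b) * t ^ (a + b - 1) := by
  have h1 : ((∫ s in (0:ℝ)..t, s ^ (a - 1) * (t - s) ^ (b - 1) : ℝ) : ℂ)
      = ∫ s in (0:ℝ)..t, (s : ℂ) ^ ((a : ℂ) - 1) * ((t : ℂ) - s) ^ ((b : ℂ) - 1) := by
    rw [← intervalIntegral.integral_ofReal]
    rw [intervalIntegral.integral_of_le ht.le, intervalIntegral.integral_of_le ht.le]
    refine setIntegral_congr_fun measurableSet_Ioc fun x hx => ?_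
    push_cast
    rw [Complex.ofReal_cpow hx.1.le, Complex.ofReal_cpow (by linarith [hx.2] : (0:ℝ) ≤ t - x)]
    push_cast
    ring
  have h2 := Complex.betaIntegral_scaled (a : ℂ) (b : ℂ) ht
  have h3 := Complex.Gamma_mul_Gamma_eq_betaIntegral
    (s := (a:ℂ)) (t := (b:ℂ)) (by simpa using ha) (by simpa using hb)
  have hne : Complex.Gamma ((a:ℂ) + b) ≠ 0 := by
    rw [← Complex.ofReal_add, Complex.Gamma_ofReal]
    exact_mod_cast (Real.Gamma_pos_of_pos (by linarith)).ne'
  have hbeta : Complex.betaIntegral a b =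
      ((Real.Gamma a * Real.Gamma b / Real.Gamma (a + b) : ℝ) : ℂ) := by
    have hg : ((Real.Gamma (a + b) : ℝ) : ℂ) = Complex.Gamma ((a:ℂ) + b) := by
      rw [← Complex.ofReal_add, Complex.Gamma_ofReal]
    rw [Complex.ofReal_div, Complex.ofReal_mul, hg, ← Complex.Gamma_ofReal a,
      ← Complex.Gamma_ofReal b, eq_div_iff hne, mul_comm]
    exact h3.symm
  have hcp : ((t:ℂ)) ^ ((a:ℂ) + (b:ℂ) - 1) = ((t ^ (a + b - 1) : ℝ) : ℂ) := by
    rw [Complex.ofReal_cpow ht.le]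
    norm_cast
  have : ((∫ s in (0:ℝ)..t, s ^ (a - 1) * (t - s) ^ (b - 1) : ℝ) : ℂ)
      = ((Real.Gamma a * Real.Gamma b / Real.Gamma (a + b) * t ^ (a + b - 1) : ℝ) : ℂ) := by
    rw [h1, h2, hbeta, hcp, Complex.ofReal_mul]
    ring
  exact_mod_cast this

lemma gamma_ratio {α : ℝ} (hα0 : 0 < α) (hα1 : α < 1) {y : ℝ} (hy : 1 ≤ y) :
    y * Real.Gamma y ≤ Real.Gamma (y + α) * (y + α) ^ (1 - α) := by
  have hy0 : 0 < y := by linarith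
  have hya : 0 < y + α := by linarith
  have hc := Real.convexOn_log_Gamma.2 (Set.mem_Ioi.2 hya)
    (Set.mem_Ioi.2 (by linarith : (0:ℝ) < y + α + 1)) hα0.le
    (by linarith : (0:ℝ) ≤ 1 - α) (by ring)
  have hpt : α • (y + α) + (1 - α) • (y + α + 1) = y + 1 := by
    simp only [smul_eq_mul]; ring
  rw [hpt] at hc
  simp only [Function.comp_apply, smul_eq_mul] at hc
  rw [Real.Gamma_add_one hy0.ne', Real.Gamma_add_one (by positivity : y + α ≠ 0)] at hc
  have hG : 0 < Real.Gamma y := Real.Gamma_pos_of_pos hy0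
  have hGa : 0 < Real.Gamma (y + α) := Real.Gamma_pos_of_pos hya
  rw [Real.log_mul hy0.ne' hG.ne', Real.log_mul hya.ne' hGa.ne'] at hc
  have key : Real.log (y * Real.Gamma y) ≤
      Real.log (Real.Gamma (y + α) * (y + α) ^ (1 - α)) := by
    rw [Real.log_mul hy0.ne' hG.ne',
      Real.log_mul hGa.ne' (by positivity : ((y + α) ^ (1 - α) : ℝ) ≠ 0),
      Real.log_rpow hya]
    nlinarith [hc]
  have := Real.exp_le_exp.2 key
  rwa [Real.exp_log (by positivity), Real.exp_log (by positivity)] at this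

lemma ml_summable {α : ℝ} (hα0 : 0 < α) (hα1 : α < 1) (x : ℝ) :
    Summable (fun n : ℕ => x ^ n / Real.Gamma ((n : ℝ) * α + 1)) := by
  apply summable_of_ratio_norm_eventually_le (r := 1/2) (by norm_num)
  have htend : Tendsto (fun n : ℕ => ((n : ℝ) * α + 1 + α) ^ (-α)) atTop (nhds 0) := by
    apply (tendsto_rpow_neg_atTop hα0).comp
    exact tendsto_atTop_add_const_right _ α
      (tendsto_atTop_add_const_right _ 1 (tendsto_natCast_atTop_atTop.atTop_mul_const hα0))
  have hev : ∀ᶠ n : ℕ in atTop, ((n : ℝ) * α + 1 + α) ^ (-α) < 1 / (4 * (|x| + 1)) :=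
    htend.eventually (gt_mem_nhds (by positivity))
  filter_upwards [hev] with n hn
  set y : ℝ := (n : ℝ) * α + 1 with hy
  have hy1 : 1 ≤ y := by
    have : (0:ℝ) ≤ (n : ℝ) * α := by positivity
    linarith
  have hya : 0 < y + α := by linarith
  have hGy : 0 < Real.Gamma y := Real.Gamma_pos_of_pos (by linarith)
  have hGya : 0 < Real.Gamma (y + α) := Real.Gamma_pos_of_pos hya
  have hexp : ((n + 1 : ℕ) : ℝ) * α + 1 = y + α := by push_cast; rw [hy]; ring
  rw [hexp]
  have hkey := gamma_ratio hα0 hα1 hy1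
  have hsplit : (y + α) ^ ((1:ℝ) - α) = (y + α) * (y + α) ^ (-α) := by
    rw [sub_eq_add_neg, Real.rpow_add hya, Real.rpow_one]
  rw [hsplit] at hkey
  have hr : 0 < (y + α) ^ (-α) := Real.rpow_pos_of_pos hya _
  have h2y : y + α ≤ 2 * y := by linarith
  have hb : Real.Gamma y ≤ 2 * Real.Gamma (y + α) * ((y + α) ^ (-α)) := by
    nlinarith [hkey, hGya.le, hr.le]
  have h5 : 2 * |x| * Real.Gamma y ≤ Real.Gamma (y + α) := by
    have hx0 : 0 ≤ |x| := abs_nonneg x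
    have s1 := mul_le_mul_of_nonneg_left hb (by positivity : (0:ℝ) ≤ 2 * |x|)
    have s2 := mul_le_mul_of_nonneg_left hn.le
      (by positivity : (0:ℝ) ≤ 4 * |x| * Real.Gamma (y + α))
    have s3 : 4 * |x| * Real.Gamma (y + α) * (1 / (4 * (|x| + 1))) ≤ Real.Gamma (y + α) := by
      rw [mul_one_div, div_le_iff₀ (by positivity : (0:ℝ) < 4 * (|x| + 1))]
      nlinarith [hGya.le]
    nlinarith [s1, s2, s3]
  have e1 : ‖x ^ (n+1) / Real.Gamma (y + α)‖ = |x| ^ (n+1) / Real.Gamma (y + α) := by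
    rw [norm_div, Real.norm_eq_abs, Real.norm_eq_abs, abs_pow, abs_of_pos hGya]
  have e2 : ‖x ^ n / Real.Gamma y‖ = |x| ^ n / Real.Gamma y := by
    rw [norm_div, Real.norm_eq_abs, Real.norm_eq_abs, abs_pow, abs_of_pos hGy]
  rw [e1, e2, div_le_iff₀ hGya, pow_succ]
  have h7 : 1/2 * (|x| ^ n / Real.Gamma y) * Real.Gamma (y + α)
      = |x| ^ n * (Real.Gamma (y + α) / (2 * Real.Gamma y)) := by ring
  rw [h7]
  apply mul_le_mul_of_nonneg_left _ (pow_nonneg (abs_nonneg x) n)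
  rw [le_div_iff₀ (by positivity)]
  nlinarith [h5]

lemma integrable_aux {p b t : ℝ} (hp : 0 ≤ p) (hb : 0 < b) (ht : 0 < t) :
    IntervalIntegrable (fun s => s ^ p * (t - s) ^ (b - 1)) volume 0 t := by
  have h0 : IntervalIntegrable (fun s : ℝ => s ^ (b - 1)) volume 0 t :=
    intervalIntegral.intervalIntegrable_rpow' (by linarith)
  have h1 : IntervalIntegrable (fun s : ℝ => (t - s) ^ (b - 1)) volume 0 t := by
    have h2 := h0.comp_sub_left t
    simpa using h2.symm
  have hcont : ContinuousOn (fun s : ℝ => s ^ p) (Set.uIcc 0 t) :=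
    fun x _ => (Real.continuousAt_rpow_const x p (Or.inr hp)).continuousWithinAt
  exact h1.continuousOn_mul hcont

/-- Corollary (case `p = 2` of the Main Lemma): for `λ ∈ (1/2, 1)`, `γ > 0`, `t > 0`,
`(γ / Γ(2λ-1)) ∫_0^t (t-s)^{2λ-2} E_{2λ-1}(γ s^{2λ-1}) ds ≤ E_{2λ-1}(γ t^{2λ-1})`. -/
theorem main_lemma_p_two (lam γ t : ℝ) (hlam : lam ∈ Set.Ioo (1 / 2 : ℝ) 1)
    (hγ : 0 < γ) (ht : 0 < t) :
    γ / Real.Gamma (2 * lam - 1) *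
        ∫ s in (0 : ℝ)..t,
          (t - s) ^ (2 * lam - 2) * mittagLeffler (2 * lam - 1) (γ * s ^ (2 * lam - 1))
      ≤ mittagLeffler (2 * lam - 1) (γ * t ^ (2 * lam - 1)) := by
  obtain ⟨hl, hl'⟩ := hlam
  set a : ℝ := 2 * lam - 1 with ha
  have hα0 : 0 < a := by rw [ha]; linarith
  have hα1 : a < 1 := by rw [ha]; linarith
  have hexp2 : 2 * lam - 2 = a - 1 := by rw [ha]; ring
  rw [hexp2]
  have hGa : 0 < Real.Gamma a := Real.Gamma_pos_of_pos hα0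
  have hGn : ∀ n : ℕ, 0 < Real.Gamma ((n:ℝ) * a + 1) :=
    fun n => Real.Gamma_pos_of_pos (by positivity)
  set b : ℕ → ℝ := fun n => (γ * t ^ a) ^ n / Real.Gamma ((n:ℝ) * a + 1) with hbdef
  have hsumb : Summable b := ml_summable hα0 hα1 _
  -- pow expansion helper
  have hp : ∀ (x : ℝ), 0 ≤ x → ∀ m : ℕ, (γ * x ^ a) ^ m = γ ^ m * x ^ ((m:ℝ) * a) := by
    intro x hx m
    rw [mul_pow, ← Real.rpow_natCast (x ^ a) m, ← Real.rpow_mul hx, mul_comm a (m:ℝ)]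
  set F : ℕ → ℝ → ℝ := fun n s =>
    γ ^ n / Real.Gamma ((n:ℝ) * a + 1) * (s ^ ((n:ℝ) * a) * (t - s) ^ (a - 1)) with hF
  have hFint : ∀ n : ℕ, IntegrableOn (F n) (Set.Ioc 0 t) := by
    intro n
    have h := (integrable_aux (p := (n:ℝ) * a) (by positivity) hα0 ht).const_mul
      (γ ^ n / Real.Gamma ((n:ℝ) * a + 1))
    exact (intervalIntegrable_iff_integrableOn_Ioc_of_le ht.le).mp h
  -- value of each integral
  have hval : ∀ n : ℕ, ∫ s in Set.Ioc (0:ℝ) t, F n s = Real.Gamma a / γ * b (n+1) := by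
    intro n
    rw [← intervalIntegral.integral_of_le ht.le]
    simp only [hF]
    rw [intervalIntegral.integral_const_mul]
    have hbeta := beta_real (a := (n:ℝ) * a + 1) (b := a) (by positivity) hα0 ht
    simp only [add_sub_cancel_right] at hbeta
    rw [hbeta]
    simp only [hbdef]
    rw [hp t ht.le (n+1)]
    have e1 : ((n:ℝ) * a + 1 + a - 1) = ((n + 1 : ℕ) : ℝ) * a := by push_cast; ring
    have e2 : ((n:ℝ) * a + 1 + a) = ((n + 1 : ℕ) : ℝ) * a + 1 := by push_cast; ring
    rw [e1, e2]
    have hG1 := (hGn n).ne'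
    have hG2 := (hGn (n+1)).ne'
    field_simp
    ring
  -- norm integrals
  have hnorm_eq : ∀ n : ℕ, (∫ s in Set.Ioc (0:ℝ) t, ‖F n s‖) = ∫ s in Set.Ioc (0:ℝ) t, F n s := by
    intro n
    refine setIntegral_congr_fun measurableSet_Ioc fun s hs => ?_
    have h1 : 0 ≤ F n s := by
      simp only [hF]
      have hs0 : (0:ℝ) ≤ s := hs.1.le
      have hts : (0:ℝ) ≤ t - s := by linarith [hs.2]
      have := (hGn n).le
      positivity
    exact Real.norm_of_nonneg h1
  have hshift : Summable fun n : ℕ => b (n + 1) := (summable_nat_add_iff 1).mpr hsumb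
  have hnormsum : Summable fun n : ℕ => ∫ s in Set.Ioc (0:ℝ) t, ‖F n s‖ := by
    have : (fun n : ℕ => ∫ s in Set.Ioc (0:ℝ) t, ‖F n s‖)
        = fun n => Real.Gamma a / γ * b (n + 1) := by
      funext n; rw [hnorm_eq n, hval n]
    rw [this]
    exact hshift.mul_left _
  -- pointwise identification of the integrand
  have hml : Set.EqOn (fun s => (t - s) ^ (a - 1) * mittagLeffler a (γ * s ^ a))
      (fun s => ∑' n : ℕ, F n s) (Set.Ioc (0:ℝ) t) := by
    intro s hs
    have : mittagLeffler a (γ * s ^ a)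
        = ∑' n : ℕ, (γ * s ^ a) ^ n / Real.Gamma ((n:ℝ) * a + 1) := rfl
    simp only [this, ← tsum_mul_left]
    refine tsum_congr fun n => ?_
    rw [hp s hs.1.le n]
    simp only [hF]
    ring
  rw [intervalIntegral.integral_of_le ht.le, setIntegral_congr_fun measurableSet_Ioc hml,
    ← MeasureTheory.integral_tsum_of_summable_integral_norm hFint hnormsum]
  have htsum : ∑' n : ℕ, ∫ s in Set.Ioc (0:ℝ) t, F n s
      = Real.Gamma a / γ * ∑' n : ℕ, b (n + 1) := by
    rw [← tsum_mul_left]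
    exact tsum_congr hval
  rw [htsum]
  have hcancel : γ / Real.Gamma a * (Real.Gamma a / γ * ∑' n : ℕ, b (n + 1))
      = ∑' n : ℕ, b (n + 1) := by
    field_simp
  rw [hcancel]
  have hzero := Summable.tsum_eq_zero_add hsumb
  have hb0 : b 0 = 1 := by simp [hbdef, Real.Gamma_one]
  have hrhs : mittagLeffler a (γ * t ^ a) = ∑' n : ℕ, b n := rfl
  rw [hrhs]
  rw [hzero, hb0]
  linarith [le_refl (∑' n : ℕ, b (n + 1))]
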